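/- (Proposition 1, conditional covariance case.) Let H_X and H_Y be real Hilbert spaces, w_1, …, w_n ∈ H_X with Gram matrix k (k_{ij} = ⟨w_i, w_j⟩), u_1, …, u_n ∈ H_Y with Gram matrix L (L_{ij} = ⟨u_i, u_j⟩), ε > 0, and λ > 0. Let D := Ĉ_YY − Ĉ_YX ∘ (Ĉ_XX + ε·Id)^{-1} ∘ Ĉ_XY be the regularized empirical conditional covariance operator on H_Y, and set T := L − (k + nε·I_n)^{-1} k L. Assume the matrix k ⊗ T + nλ I_{n²} is invertible. If h_1, …, h_n ∈ H_Y satisfy Σ_{j=1}^n k_{ij} D h_j + λ h_i = u_i for all i = 1, …, n, then for every a ∈ ℝ^n and every v ∈ H_Y, ⟨Σ_{i=1}^n a_i D h_i, v⟩ = bᵀ (aᵀ ⊗ T)(k ⊗ T + nλ I_{n²})^{-1} vec(I_n), where b ∈ ℝ^n has entries b_i = ⟨u_i, v⟩ and aᵀ ⊗ T denotes the n × n² Kronecker product of the row vector aᵀ with T. -/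

import Mathlib

open scoped RealInnerProductSpace BigOperators Kronecker
open Matrix

/-- `vecStack A` is the vectorization of the matrix `A` obtained by stacking its
columns: the entry of `vecStack A` at index `(j, i)` (column `j`, row `i`) is `A i j`. -/
def vecStack {m p : Type*} {α : Type*} (A : Matrix p m α) : m × p → α :=
  fun x => A x.2 x.1

/-- Proposition 1, conditional covariance case: with
`D = Ĉ_YY − Ĉ_YX ∘ (Ĉ_XX + ε Id)⁻¹ ∘ Ĉ_XY` the regularized empirical conditional
covariance operator, `T = L − (k + nε Iₙ)⁻¹ k L`, and `k ⊗ T + nλ I_{n²}` assumed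
invertible, any solution `h` of `Σⱼ kᵢⱼ D hⱼ + λ hᵢ = uᵢ` satisfies
`⟪Σᵢ aᵢ D hᵢ, v⟫ = bᵀ (aᵀ ⊗ T)(k ⊗ T + nλ I_{n²})⁻¹ vec(Iₙ)` with `bᵢ = ⟪uᵢ, v⟫`. -/
theorem proposition1_conditional_covariance_case
    {HX HY : Type*} [NormedAddCommGroup HX] [InnerProductSpace ℝ HX]
    [NormedAddCommGroup HY] [InnerProductSpace ℝ HY]
    (n : ℕ) (hn : 0 < n) (w : Fin n → HX) (u : Fin n → HY)
    (k : Matrix (Fin n) (Fin n) ℝ) (hk : ∀ i j, k i j = ⟪w i, w j⟫)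
    (L : Matrix (Fin n) (Fin n) ℝ) (hL : ∀ i j, L i j = ⟪u i, u j⟫)
    (ε : ℝ) (hε : 0 < ε) (lam : ℝ) (hlam : 0 < lam)
    -- `R` is the inverse of the regularized covariance operator `Ĉ_XX + ε Id`:
    (R : HX → HX)
    (hR1 : ∀ φ : HX, ((1 / (n : ℝ)) • ∑ p, ⟪w p, R φ⟫ • w p) + ε • R φ = φ)
    (hR2 : ∀ φ : HX, R (((1 / (n : ℝ)) • ∑ p, ⟪w p, φ⟫ • w p) + ε • φ) = φ)
    -- `D = Ĉ_YY − Ĉ_YX ∘ R ∘ Ĉ_XY`: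
    (D : HY → HY)
    (hD : ∀ φ : HY,
      D φ = (1 / (n : ℝ)) • ∑ p, ⟪u p, φ⟫ • u p
        - (1 / (n : ℝ)) •
            ∑ p, ⟪w p, R ((1 / (n : ℝ)) • ∑ q, ⟪u q, φ⟫ • w q)⟫ • u p)
    -- `T = L − (k + nε Iₙ)⁻¹ k L`:
    (T : Matrix (Fin n) (Fin n) ℝ)
    (hT : T = L - (k + ((n : ℝ) * ε) • 1)⁻¹ * k * L)
    (hinv : IsUnit (k ⊗ₖ T
      + ((n : ℝ) * lam) • (1 : Matrix (Fin n × Fin n) (Fin n × Fin n) ℝ))) :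
    ∀ h : Fin n → HY,
      (∀ i, (∑ j, k i j • D (h j)) + lam • h i = u i) →
      ∀ (a : Fin n → ℝ) (v : HY),
        ⟪∑ i, a i • D (h i), v⟫
          = (fun i => ⟪u i, v⟫) ⬝ᵥ
              (Matrix.of fun (p : Fin n) (jq : Fin n × Fin n) => a jq.1 * T p jq.2).mulVec
                ((k ⊗ₖ T + ((n : ℝ) * lam) • 1)⁻¹.mulVec
                  (vecStack (1 : Matrix (Fin n) (Fin n) ℝ))) := by
  intro h hh a v
  have hn' : (n : ℝ) ≠ 0 := Nat.cast_ne_zero.mpr hn.ne'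
  -- the operator S = Ĉ_XX + ε Id
  set S : HX → HX := fun φ => ((1 / (n : ℝ)) • ∑ p, ⟪w p, φ⟫ • w p) + ε • φ with hSdef
  have hR1S : ∀ φ, S (R φ) = φ := hR1
  have hR2S : ∀ φ, R (S φ) = φ := hR2
  have hSadd : ∀ x y, S (x + y) = S x + S y := by
    intro x y
    simp only [hSdef, inner_add_right, add_smul, Finset.sum_add_distrib, smul_add]
    abel
  have hSsmul : ∀ (c : ℝ) (x : HX), S (c • x) = c • S x := by
    intro c x
    simp only [hSdef, real_inner_smul_right, mul_smul, ← Finset.smul_sum,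
      smul_add, smul_comm c (1 / (n : ℝ)), smul_comm c ε]
  have hRadd : ∀ x y, R (x + y) = R x + R y := by
    intro x y
    have hxy : x + y = S (R x + R y) := by rw [hSadd, hR1S, hR1S]
    rw [hxy, hR2S]
  have hRsmul : ∀ (c : ℝ) (x : HX), R (c • x) = c • R x := by
    intro c x
    have hx : c • x = S (c • R x) := by rw [hSsmul, hR1S]
    rw [hx, hR2S]
  have hR0 : R 0 = 0 := by simpa using hRsmul 0 0
  have hRsum : ∀ c : Fin n → ℝ,
      R ((1 / (n : ℝ)) • ∑ q, c q • w q) = (1 / (n : ℝ)) • ∑ q, c q • R (w q) := by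
    intro c
    rw [hRsmul]
    congr 1
    have hsum : ∀ s : Finset (Fin n),
        R (∑ q ∈ s, c q • w q) = ∑ q ∈ s, c q • R (w q) := by
      intro s
      induction s using Finset.induction with
      | empty => simpa using hR0
      | insert _ _ hx ih =>
        rw [Finset.sum_insert hx, hRadd, hRsmul, ih, Finset.sum_insert hx]
    exact hsum _
  -- the matrices M and N
  set M : Matrix (Fin n) (Fin n) ℝ := Matrix.of fun p q => ⟪w p, R (w q)⟫ with hMdef
  set N : Matrix (Fin n) (Fin n) ℝ := 1 - (1 / (n : ℝ)) • M with hNdef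
  have hks : ∀ i j, k i j = k j i := by
    intro i j; rw [hk, hk, real_inner_comm]
  -- inner products against R of combinations of w's
  have hMw : ∀ (c : Fin n → ℝ) (p : Fin n),
      ⟪w p, R ((1 / (n : ℝ)) • ∑ q, c q • w q)⟫ = (1 / (n : ℝ)) * (M *ᵥ c) p := by
    intro c p
    rw [hRsum, real_inner_smul_right, inner_sum]
    congr 1
    simp only [Matrix.mulVec, dotProduct, real_inner_smul_right]
    exact Finset.sum_congr rfl fun q _ => by rw [hMdef]; simp [mul_comm]
  have hNapp : ∀ (c : Fin n → ℝ) (p : Fin n),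
      (N *ᵥ c) p = c p - (1 / (n : ℝ)) * (M *ᵥ c) p := by
    intro c p
    simp [hNdef, Matrix.sub_mulVec, Matrix.smul_mulVec, Matrix.one_mulVec]
  -- expansion of D
  have hDexp : ∀ φ : HY,
      D φ = (1 / (n : ℝ)) • ∑ p, (N *ᵥ fun q => ⟪u q, φ⟫) p • u p := by
    intro φ
    rw [hD φ, ← smul_sub, ← Finset.sum_sub_distrib]
    congr 1
    refine Finset.sum_congr rfl fun p _ => ?_
    rw [hMw, hNapp, sub_smul]
  -- the matrix B of coefficients of h
  set B : Matrix (Fin n) (Fin n) ℝ := Matrix.of fun q i => (⟪u q, h i⟫ : ℝ) with hBdef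
  have hcolX : ∀ (X : Matrix (Fin n) (Fin n) ℝ) (i : Fin n) (p : Fin n),
      (X *ᵥ fun q => ⟪u q, h i⟫) p = (X * B) p i := by
    intro X i p
    simp [Matrix.mulVec, dotProduct, Matrix.mul_apply, hBdef]
  have hDuin : ∀ (φ : HY) (r : Fin n),
      ⟪u r, D φ⟫ = (1 / (n : ℝ)) * ((L * N) *ᵥ fun q => ⟪u q, φ⟫) r := by
    intro φ r
    rw [hDexp, real_inner_smul_right, inner_sum, ← Matrix.mulVec_mulVec]
    congr 1
    simp only [Matrix.mulVec, dotProduct, real_inner_smul_right]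
    refine Finset.sum_congr rfl fun p _ => ?_
    rw [hL]; ring
  -- the basic matrix identity for h
  have hfB : lam • B = L - (1 / (n : ℝ)) • (L * N * B * k) := by
    ext q i
    have hqi := congrArg (fun y => (⟪u q, y⟫ : ℝ)) (hh i)
    simp only [inner_add_right, real_inner_smul_right, inner_sum] at hqi
    have e1 : ∑ j, k i j * ⟪u q, D (h j)⟫ = (1 / (n : ℝ)) * (L * N * B * k) q i := by
      rw [Matrix.mul_apply, Finset.mul_sum]
      refine Finset.sum_congr rfl fun j _ => ?_
      rw [hDuin, hcolX (L * N) j q, hks i j]; ring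
    rw [e1] at hqi
    have : lam * B q i = L q i - (1 / (n : ℝ)) * (L * N * B * k) q i := by
      have hBqi : (B : Matrix (Fin n) (Fin n) ℝ) q i = ⟪u q, h i⟫ := rfl
      have hLqi : L q i = ⟪u q, u i⟫ := hL q i
      rw [hBqi, hLqi]; linarith
    simpa using this
  -- k + nε is positive definite, hence invertible
  have hkpos : (k + ((n : ℝ) * ε) • 1).PosDef := by
    rw [Matrix.posDef_iff_dotProduct_mulVec]
    constructor
    · ext i j
      simp only [Matrix.conjTranspose_apply, Matrix.add_apply, Matrix.smul_apply,
        Matrix.one_apply, star_trivial]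
      rw [hks j i]
      by_cases hij : j = i
      · simp [hij]
      · simp [hij, Ne.symm hij]
    · intro x hx
      have hstar : star x = x := by
        funext i; simp [star_trivial]
      have hxk : x ⬝ᵥ (k *ᵥ x) = ⟪∑ i, x i • w i, ∑ j, x j • w j⟫ := by
        simp only [dotProduct, Matrix.mulVec, sum_inner, inner_sum,
          real_inner_smul_left, real_inner_smul_right, Finset.mul_sum]
        refine Finset.sum_congr rfl fun i _ => Finset.sum_congr rfl fun j _ => ?_
        rw [hk, real_inner_comm]; ring
      have hxx : 0 < x ⬝ᵥ x := by
        rcases (dotProduct_self_star_pos_iff (v := x)).2 hx with hpos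
        rwa [hstar] at hpos
      have hk0 : 0 ≤ x ⬝ᵥ (k *ᵥ x) := by
        rw [hxk]; exact real_inner_self_nonneg
      have hne : 0 < ((n : ℝ) * ε) * (x ⬝ᵥ x) := by
        have : 0 < (n : ℝ) * ε := by positivity
        exact mul_pos this hxx
      rw [hstar]
      calc (0 : ℝ) < x ⬝ᵥ (k *ᵥ x) + ((n : ℝ) * ε) * (x ⬝ᵥ x) := by linarith
        _ = x ⬝ᵥ ((k + ((n : ℝ) * ε) • 1) *ᵥ x) := by
            rw [Matrix.add_mulVec, dotProduct_add, Matrix.smul_mulVec,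
              Matrix.one_mulVec, dotProduct_smul, smul_eq_mul]
  have hkdet : IsUnit (k + ((n : ℝ) * ε) • 1).det :=
    (Matrix.isUnit_iff_isUnit_det _).mp hkpos.isUnit
  -- the key identity (k + nε)·(M/n) = k
  have hkM2 : (1 / (n : ℝ)) • (k * M) + ε • M = k := by
    ext i q
    have hiq := congrArg (fun y => (⟪w i, y⟫ : ℝ)) (hR1 (w q))
    simp only [inner_add_right, real_inner_smul_right, inner_sum] at hiq
    have e1 : ∑ p, (⟪w p, R (w q)⟫ : ℝ) * ⟪w i, w p⟫ = (k * M) i q := by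
      rw [Matrix.mul_apply]
      refine Finset.sum_congr rfl fun p _ => ?_
      rw [hk]
      have : (M : Matrix (Fin n) (Fin n) ℝ) p q = ⟪w p, R (w q)⟫ := rfl
      rw [this]; ring
    rw [e1] at hiq
    have hMiq : (M : Matrix (Fin n) (Fin n) ℝ) i q = ⟪w i, R (w q)⟫ := rfl
    simp only [Matrix.add_apply, Matrix.smul_apply, smul_eq_mul]
    rw [hk i q, hMiq]
    linarith
  have hkM : (k + ((n : ℝ) * ε) • 1) * ((1 / (n : ℝ)) • M) = k := by
    rw [Matrix.add_mul, Matrix.mul_smul, Matrix.smul_mul, Matrix.one_mul, smul_smul]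
    have : (n : ℝ) * ε * (1 / (n : ℝ)) = ε := by field_simp
    rw [this]
    exact hkM2
  have hinvk : (k + ((n : ℝ) * ε) • 1)⁻¹ * k = (1 / (n : ℝ)) • M := by
    have h5 := congrArg (fun X => (k + ((n : ℝ) * ε) • 1)⁻¹ * X) hkM
    try simp only at h5
    rw [Matrix.nonsing_inv_mul_cancel_left _ _ hkdet] at h5
    exact h5.symm
  have hTN : T = N * L := by
    rw [hT, hinvk, hNdef, Matrix.sub_mul, Matrix.one_mul]
  -- the matrix G = N·B satisfies nλ·G + T·G·k = n·T
  have hG : ((n : ℝ) * lam) • (N * B) + T * (N * B) * k = (n : ℝ) • T := by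
    have h2 := congrArg (fun X => N * X) hfB
    simp only [Matrix.mul_smul, Matrix.mul_sub] at h2
    have hassoc : N * (L * N * B * k) = (N * L) * (N * B) * k := by
      simp only [Matrix.mul_assoc]
    rw [hassoc, ← hTN] at h2
    have h3 := congrArg (fun X => (n : ℝ) • X) h2
    simp only [smul_smul, smul_sub] at h3
    rw [show (n : ℝ) * (1 / (n : ℝ)) = 1 by field_simp, one_smul] at h3
    -- h3 : ((n:ℝ) * lam) • (N * B) = (n:ℝ) • T - T * (N * B) * k
    rw [h3]
    abel
  -- the Kronecker matrix Q
  set Q : Matrix (Fin n × Fin n) (Fin n × Fin n) ℝ :=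
    k ⊗ₖ T + ((n : ℝ) * lam) • 1 with hQdef
  have hQdet : IsUnit Q.det := (Matrix.isUnit_iff_isUnit_det _).mp hinv
  have hvecQ : ∀ X : Matrix (Fin n) (Fin n) ℝ,
      Q *ᵥ vecStack X = vecStack (T * X * k + ((n : ℝ) * lam) • X) := by
    intro X
    funext x
    obtain ⟨j, i⟩ := x
    simp only [hQdef, Matrix.add_mulVec, Matrix.smul_mulVec, Matrix.one_mulVec,
      Pi.add_apply, Pi.smul_apply, vecStack, Matrix.add_apply, Matrix.smul_apply,
      smul_eq_mul]
    congr 1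
    simp only [Matrix.mulVec, dotProduct, Fintype.sum_prod_type,
      Matrix.kroneckerMap_apply, Matrix.mul_apply, Finset.sum_mul, vecStack]
    refine Finset.sum_congr rfl fun l _ => Finset.sum_congr rfl fun q _ => ?_
    rw [hks j l]; ring
  -- the matrix F with vecStack F = Q⁻¹ vec(1)
  set F : Matrix (Fin n) (Fin n) ℝ :=
    Matrix.of fun i j => (Q⁻¹ *ᵥ vecStack (1 : Matrix (Fin n) (Fin n) ℝ)) (j, i)
    with hFdef
  have hvF : vecStack F = Q⁻¹ *ᵥ vecStack (1 : Matrix (Fin n) (Fin n) ℝ) := by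
    funext x; cases x; rfl
  have hQF : T * F * k + ((n : ℝ) * lam) • F = 1 := by
    have h1 : Q *ᵥ vecStack F = vecStack (1 : Matrix (Fin n) (Fin n) ℝ) := by
      rw [hvF, Matrix.mulVec_mulVec, Matrix.mul_nonsing_inv _ hQdet, Matrix.one_mulVec]
    have h2 := (hvecQ F).symm.trans h1
    ext i j
    exact congrFun h2 (j, i)
  -- identification of N·B with n·(T·F)
  have hGF : N * B = (n : ℝ) • (T * F) := by
    have e3 : T * (T * F * k) + ((n : ℝ) * lam) • (T * F) = T := by
      rw [← Matrix.mul_smul T, ← Matrix.mul_add, hQF, Matrix.mul_one]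
    have e2 : T * ((n : ℝ) • (T * F)) * k + ((n : ℝ) * lam) • ((n : ℝ) • (T * F))
        = (n : ℝ) • T := by
      rw [Matrix.mul_smul, Matrix.smul_mul, smul_smul, Matrix.mul_assoc,
        show (n : ℝ) * lam * (n : ℝ) = (n : ℝ) * ((n : ℝ) * lam) by ring,
        ← smul_smul, ← smul_add, e3]
    have e1 : Q *ᵥ vecStack (N * B) = Q *ᵥ vecStack ((n : ℝ) • (T * F)) := by
      rw [hvecQ, hvecQ]
      congr 1
      rw [add_comm] at hG
      rw [hG, e2]
    have hinj : Function.Injective Q.mulVec :=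
      Matrix.mulVec_injective_iff_isUnit.mpr hinv
    have h4 := hinj e1
    ext i j
    exact congrFun h4 (j, i)
  -- final computation
  have hDv : ∀ i, (⟪D (h i), v⟫ : ℝ) = (1 / (n : ℝ)) * ∑ p, (N * B) p i * ⟪u p, v⟫ := by
    intro i
    rw [hDexp, real_inner_smul_left, sum_inner]
    congr 1
    refine Finset.sum_congr rfl fun p _ => ?_
    rw [real_inner_smul_left, hcolX N i p]
  have hLHS : (⟪∑ i, a i • D (h i), v⟫ : ℝ)
      = (1 / (n : ℝ)) * ((fun p => (⟪u p, v⟫ : ℝ)) ⬝ᵥ ((N * B) *ᵥ a)) := by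
    rw [sum_inner]
    simp only [real_inner_smul_left, hDv]
    simp only [dotProduct, Matrix.mulVec, Finset.mul_sum, Finset.sum_mul]
    rw [Finset.sum_comm]
    refine Finset.sum_congr rfl fun i _ => Finset.sum_congr rfl fun p _ => ?_
    ring
  have hRHSmat : (Matrix.of fun (p : Fin n) (jq : Fin n × Fin n) =>
        a jq.1 * T p jq.2) *ᵥ vecStack F = (T * F) *ᵥ a := by
    funext p
    simp only [Matrix.mulVec, dotProduct, Fintype.sum_prod_type, Matrix.of_apply,
      vecStack, Matrix.mul_apply, Finset.sum_mul]
    refine Finset.sum_congr rfl fun j _ => Finset.sum_congr rfl fun q _ => ?_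
    ring
  calc (⟪∑ i, a i • D (h i), v⟫ : ℝ)
      = (1 / (n : ℝ)) * ((fun p => (⟪u p, v⟫ : ℝ)) ⬝ᵥ ((N * B) *ᵥ a)) := hLHS
    _ = (fun p => (⟪u p, v⟫ : ℝ)) ⬝ᵥ ((T * F) *ᵥ a) := by
        rw [hGF, Matrix.smul_mulVec, dotProduct_smul, smul_eq_mul]
        field_simp
    _ = (fun i => (⟪u i, v⟫ : ℝ)) ⬝ᵥ
          (Matrix.of fun (p : Fin n) (jq : Fin n × Fin n) => a jq.1 * T p jq.2).mulVec
            ((k ⊗ₖ T + ((n : ℝ) * lam) • 1)⁻¹.mulVec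
              (vecStack (1 : Matrix (Fin n) (Fin n) ℝ))) := by
        rw [← hQdef, ← hvF, hRHSmat]
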